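/- Let q₀ ∈ (0, 1/2] and δ ≥ 0, and define the Cactus approximate solution γ̂ = q₀ + √(2·δ·q₀·(1 − q₀)). If γ̂ ≤ 1/2 (equivalently, if δ ≤ (1/2 − q₀)²/(2·q₀·(1 − q₀))), then γ̂·log(γ̂/q₀) + (1 − γ̂)·log((1 − γ̂)/(1 − q₀)) ≤ δ; that is, the approximate solution satisfies the KL-divergence constraint Φ(γ̂) ≤ δ. -/

import Mathlib

open Real Set

-- inner function G
private lemma G_mono (a : ℝ) (ha : 0 < a) (ha2 : a ≤ 1/2) :
    MonotoneOn (fun t : ℝ => (t-a)/(a*(1-a)) - Real.log t + Real.log a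
      + Real.log (1-t) - Real.log (1-a)) (Icc a (1/2)) := by
  have ha1 : a < 1 := lt_of_le_of_lt ha2 (by norm_num)
  apply monotoneOn_of_deriv_nonneg (convex_Icc _ _)
  · apply ContinuousOn.sub
    apply ContinuousOn.add
    apply ContinuousOn.add
    apply ContinuousOn.sub
    · exact (continuousOn_id.sub continuousOn_const).div_const _
    · exact ContinuousOn.log continuousOn_id
        (fun x hx => ne_of_gt (lt_of_lt_of_le ha hx.1))
    · exact continuousOn_const
    · exact ContinuousOn.log (continuousOn_const.sub continuousOn_id)
        (fun x hx => by have h2 := hx.2; intro h; rw [sub_eq_zero] at h; linarith [h.symm.le])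
    · exact continuousOn_const
  · rw [interior_Icc]
    intro x hx
    have hx0 : 0 < x := lt_trans ha hx.1
    have hx1 : (0:ℝ) < 1-x := by linarith [hx.2]
    apply DifferentiableAt.differentiableWithinAt
    apply DifferentiableAt.sub _ (differentiableAt_const _)
    apply DifferentiableAt.add
    apply DifferentiableAt.add
    apply DifferentiableAt.sub
    · exact (differentiableAt_id.sub_const a).div_const _
    · exact Real.differentiableAt_log hx0.ne'
    · exact differentiableAt_const _
    · exact (Real.differentiableAt_log hx1.ne').comp x
        ((differentiableAt_const 1).sub differentiableAt_id)
  · rw [interior_Icc]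
    intro x hx
    have hx0 : 0 < x := lt_trans ha hx.1
    have hx1 : x < 1 := by linarith [hx.2]
    have : HasDerivAt (fun t : ℝ => (t-a)/(a*(1-a)) - Real.log t + Real.log a
        + Real.log (1-t) - Real.log (1-a)) (1/(a*(1-a)) - 1/x + (-1/(1-x))) x := by
      have h1 : HasDerivAt (fun t : ℝ => (t-a)/(a*(1-a))) (1/(a*(1-a))) x := by
        exact ((hasDerivAt_id x).sub_const a).div_const (a*(1-a))
      have h2 : HasDerivAt Real.log (1/x) x := by
        simpa using Real.hasDerivAt_log hx0.ne'
      have h3 : HasDerivAt (fun t : ℝ => Real.log (1-t)) (-1/(1-x)) x := by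
        have := (Real.hasDerivAt_log (by linarith : (1:ℝ)-x ≠ 0)).comp x
          ((hasDerivAt_const x (1:ℝ)).sub (hasDerivAt_id x))
        exact this.congr_deriv (by ring)
      simpa using (((h1.sub h2).add_const (Real.log a)).add h3).sub_const (Real.log (1-a))
    rw [HasDerivAt.deriv this]
    have hkey : a*(1-a) ≤ x*(1-x) := by nlinarith [hx.1, hx.2]
    have hxa : 0 < a*(1-a) := by nlinarith
    have hxx : 0 < x*(1-x) := by nlinarith
    have h1x : (0:ℝ) < 1 - x := by linarith
    have heq : 1/x + 1/(1-x) = 1/(x*(1-x)) := by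
      rw [div_add_div _ _ hx0.ne' h1x.ne']
      have h : 1*(1-x) + x*1 = 1 := by ring
      rw [h]
    have h2 : 1/(x*(1-x)) ≤ 1/(a*(1-a)) := one_div_le_one_div_of_le hxa hkey
    have hneg : (-1:ℝ)/(1-x) = -(1/(1-x)) := by ring
    linarith

private lemma tlogt_deriv {x : ℝ} (hx : 0 < x) :
    HasDerivAt (fun t : ℝ => t * Real.log t) (Real.log x + 1) x := by
  have := (hasDerivAt_id x).mul (Real.hasDerivAt_log hx.ne')
  exact this.congr_deriv (by rw [id_eq, mul_inv_cancel₀ hx.ne', one_mul])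

private lemma F_mono (a : ℝ) (ha : 0 < a) (ha2 : a ≤ 1/2) :
    MonotoneOn (fun t : ℝ => (t-a)^2/(2*a*(1-a)) - (t*Real.log t - t*Real.log a
      + (1-t)*Real.log (1-t) - (1-t)*Real.log (1-a))) (Icc a (1/2)) := by
  have ha1 : a < 1 := lt_of_le_of_lt ha2 (by norm_num)
  apply monotoneOn_of_deriv_nonneg (convex_Icc _ _)
  · apply ContinuousOn.sub
    · exact ((continuousOn_id.sub continuousOn_const).pow 2).div_const _
    · apply ContinuousOn.sub
      apply ContinuousOn.add
      apply ContinuousOn.sub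
      · exact continuousOn_id.mul (ContinuousOn.log continuousOn_id
          (fun x hx => ne_of_gt (lt_of_lt_of_le ha hx.1)))
      · exact continuousOn_id.mul continuousOn_const
      · exact (continuousOn_const.sub continuousOn_id).mul
          (ContinuousOn.log (continuousOn_const.sub continuousOn_id)
          (fun x hx => by have h2 := hx.2; intro h; rw [sub_eq_zero] at h; linarith [h.symm.le]))
      · exact (continuousOn_const.sub continuousOn_id).mul continuousOn_const
  · rw [interior_Icc]
    intro x hx
    have hx0 : 0 < x := lt_trans ha hx.1
    have hx1 : (0:ℝ) < 1 - x := by linarith [hx.2]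
    apply DifferentiableAt.differentiableWithinAt
    apply DifferentiableAt.sub
    · exact ((differentiableAt_id.sub_const a).pow 2).div_const _
    · apply DifferentiableAt.sub
      apply DifferentiableAt.add
      apply DifferentiableAt.sub
      · exact differentiableAt_id.mul (Real.differentiableAt_log hx0.ne')
      · exact differentiableAt_id.mul_const _
      · exact ((differentiableAt_const 1).sub differentiableAt_id).mul
          (((Real.differentiableAt_log hx1.ne').comp x
            ((differentiableAt_const 1).sub differentiableAt_id)))
      · exact ((differentiableAt_const 1).sub differentiableAt_id).mul_const _
  · rw [interior_Icc]
    intro x hx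
    have hx0 : 0 < x := lt_trans ha hx.1
    have hx1 : (0:ℝ) < 1 - x := by linarith [hx.2]
    have hu : HasDerivAt (fun t : ℝ => 1 - t) (-1) x := by
      exact ((hasDerivAt_const x (1:ℝ)).sub (hasDerivAt_id x)).congr_deriv (by ring)
    have hq : HasDerivAt (fun t : ℝ => (t-a)^2/(2*a*(1-a))) ((x-a)/(a*(1-a))) x := by
      have := (((hasDerivAt_id x).sub_const a).pow 2).div_const (2*a*(1-a))
      have h1 : a ≠ 0 := ha.ne'
      have h2 : 1 - a ≠ 0 := by intro h; rw [sub_eq_zero] at h; linarith [h.symm.le]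
      exact this.congr_deriv (by rw [id_eq]; field_simp; ring)
    have ht1 : HasDerivAt (fun t : ℝ => t * Real.log t) (Real.log x + 1) x := tlogt_deriv hx0
    have ht2 : HasDerivAt (fun t : ℝ => t * Real.log a) (Real.log a) x := by
      simpa using (hasDerivAt_id x).mul_const (Real.log a)
    have ht3 : HasDerivAt (fun t : ℝ => (1-t) * Real.log (1-t))
        (-(Real.log (1-x)) - 1) x := by
      have := (tlogt_deriv hx1).comp x hu
      exact this.congr_deriv (by ring)
    have ht4 : HasDerivAt (fun t : ℝ => (1-t) * Real.log (1-a)) (-(Real.log (1-a))) x := by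
      simpa using hu.mul_const (Real.log (1-a))
    have hF : HasDerivAt (fun t : ℝ => (t-a)^2/(2*a*(1-a)) - (t*Real.log t - t*Real.log a
        + (1-t)*Real.log (1-t) - (1-t)*Real.log (1-a)))
        ((x-a)/(a*(1-a)) - Real.log x + Real.log a + Real.log (1-x) - Real.log (1-a)) x := by
      have := hq.sub (((ht1.sub ht2).add ht3).sub ht4)
      exact this.congr_deriv (by ring)
    rw [hF.deriv]
    have h0 := (G_mono a ha ha2) (Set.left_mem_Icc.mpr (by linarith))
      (Set.mem_Icc.mpr ⟨hx.1.le, hx.2.le⟩) hx.1.le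
    simpa using h0

theorem stmt_15 (q₀ δ : ℝ) (hq₀_pos : 0 < q₀) (hq₀_le : q₀ ≤ 1 / 2) (hδ : 0 ≤ δ)
    (ghat : ℝ) (hghat : ghat = q₀ + Real.sqrt (2 * δ * q₀ * (1 - q₀)))
    (hle : ghat ≤ 1 / 2) :
    ghat * Real.log (ghat / q₀) + (1 - ghat) * Real.log ((1 - ghat) / (1 - q₀)) ≤ δ := by
  have hq1 : q₀ < 1 := lt_of_le_of_lt hq₀_le (by norm_num)
  have hs : 0 ≤ 2 * δ * q₀ * (1 - q₀) := by
    have h1 : (0:ℝ) ≤ 1 - q₀ := by linarith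
    have h2 : (0:ℝ) ≤ 2 * δ * q₀ := by positivity
    exact mul_nonneg h2 h1
  have hge : q₀ ≤ ghat := by
    rw [hghat]; linarith [Real.sqrt_nonneg (2 * δ * q₀ * (1 - q₀))]
  have hg0 : 0 < ghat := lt_of_lt_of_le hq₀_pos hge
  have hg1 : 0 < 1 - ghat := by linarith
  have hmem0 : q₀ ∈ Icc q₀ (1/2 : ℝ) := Set.left_mem_Icc.mpr (by linarith)
  have hmem1 : ghat ∈ Icc q₀ (1/2 : ℝ) := Set.mem_Icc.mpr ⟨hge, hle⟩
  have hF := (F_mono q₀ hq₀_pos hq₀_le) hmem0 hmem1 hge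
  have hsq : (ghat - q₀)^2 = 2 * δ * q₀ * (1 - q₀) := by
    rw [hghat]
    simp only [add_sub_cancel_left]
    exact Real.sq_sqrt hs
  have hquad : (ghat - q₀)^2 / (2*q₀*(1-q₀)) = δ := by
    rw [hsq]
    have h1 : q₀ ≠ 0 := hq₀_pos.ne'
    have h2 : (1:ℝ) - q₀ ≠ 0 := by intro h; rw [sub_eq_zero] at h; linarith [h.symm.le]
    field_simp
  rw [Real.log_div hg0.ne' hq₀_pos.ne', Real.log_div hg1.ne' (by linarith : (1:ℝ) - q₀ ≠ 0)]
  have hFa : (q₀-q₀)^2/(2*q₀*(1-q₀)) - (q₀*Real.log q₀ - q₀*Real.log q₀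
      + (1-q₀)*Real.log (1-q₀) - (1-q₀)*Real.log (1-q₀)) = 0 := by ring
  nlinarith [hF, hquad]
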